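/- Let d ≥ 1, let D be an open convex subset of the d×d real matrices, and let W : D → ℝ be twice continuously differentiable. Let a, b ∈ ℝ^d, let ν ∈ ℝ^d be a unit vector, let F₋ be a d×d matrix and t > 0 be such that the segment { t·F₋ + s·t·((b−a) ⊗ ν) : s ∈ [0,1] } is contained in D. Suppose that condition (C) holds: for each i = 1,…,d, Σ_α ( ∂W/∂F_{iα}(t·F₋ + t·(b−a)⊗ν) − ∂W/∂F_{iα}(t·F₋) ) ν_α + (b−a)_i = 0. If W is rank-one convex on D, i.e. Σ_{i,j,α,β} ∂²W/∂F_{iα}∂F_{jβ}(F) ν_α ν_β ξ_i ξ_j > 0 for every F ∈ D, every nonzero ξ ∈ ℝ^d and every unit vector ν ∈ ℝ^d, then a = b. Equivalently, if condition (C) holds with a ≠ b, then rank-one convexity of W is violated on D. -/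

import Mathlib

open Finset Set

/-- Decompose a `Fin d → Fin d → ℝ` "matrix" over the standard basis. -/
lemma pi_matrix_decomp {d : ℕ} (x : Fin d → Fin d → ℝ) :
    x = ∑ i, ∑ α, x i α • (Pi.single i (Pi.single α 1) : Fin d → Fin d → ℝ) := by
  funext i' α'
  simp only [Finset.sum_apply, Pi.smul_apply, smul_eq_mul, Pi.single_apply,
    mul_ite, mul_one, mul_zero, ite_apply, Pi.zero_apply]
  simp [Finset.sum_ite_eq]

/-- Evaluate a continuous linear functional on a matrix via the standard basis. -/
lemma clm_eval {d : ℕ} (L : (Fin d → Fin d → ℝ) →L[ℝ] ℝ) (x : Fin d → Fin d → ℝ) :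
    L x = ∑ i, ∑ α, x i α * L (Pi.single i (Pi.single α 1)) := by
  conv_lhs => rw [pi_matrix_decomp x]
  simp [smul_eq_mul]

/-- Evaluate a continuous-linear-map-valued continuous linear map on a matrix. -/
lemma clm2_eval {d : ℕ} (B : (Fin d → Fin d → ℝ) →L[ℝ] ((Fin d → Fin d → ℝ) →L[ℝ] ℝ))
    (x y : Fin d → Fin d → ℝ) :
    B x y = ∑ i, ∑ α, x i α * (B (Pi.single i (Pi.single α 1)) y) := by
  conv_lhs => rw [pi_matrix_decomp x]
  simp [ContinuousLinearMap.sum_apply, smul_eq_mul]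

/-- If the equilibrium jump condition (C) for a standing phase interface with normal
`ν` joining the deformation gradients `tF₋` and `tF₋ + t(b−a)⊗ν` holds, and the stored
energy `W` is rank-one convex on the open convex set `D` containing the segment between
these gradients, then `a = b` (so a genuine jump violates rank-one convexity). -/
theorem jump_condition_contradicts_rank_one_convexity
    {d : ℕ} (hd : 1 ≤ d)
    (D : Set (Fin d → Fin d → ℝ)) (hDo : IsOpen D) (hDc : Convex ℝ D)
    (W : (Fin d → Fin d → ℝ) → ℝ) (hW : ContDiffOn ℝ 2 W D)
    (a b ν : Fin d → ℝ) (hν : ∑ α, ν α ^ 2 = 1)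
    (Fm : Fin d → Fin d → ℝ) (t : ℝ) (ht : 0 < t)
    (hseg : ∀ s ∈ Set.Icc (0 : ℝ) 1,
      (fun i α => t * Fm i α + s * t * ((b i - a i) * ν α)) ∈ D)
    (hC : ∀ i, (∑ α,
        (fderiv ℝ W (fun i' α' => t * Fm i' α' + t * ((b i' - a i') * ν α'))
            (Pi.single i (Pi.single α 1))
          - fderiv ℝ W (fun i' α' => t * Fm i' α') (Pi.single i (Pi.single α 1))) * ν α)
        + (b i - a i) = 0)
    (hROC : ∀ F ∈ D, ∀ ξ : Fin d → ℝ, ξ ≠ 0 → ∀ η : Fin d → ℝ, ∑ α, η α ^ 2 = 1 →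
      0 < ∑ i, ∑ j, ∑ α, ∑ β,
        (fderiv ℝ (fun X => fderiv ℝ W X (Pi.single j (Pi.single β 1))) F
          (Pi.single i (Pi.single α 1))) * η α * η β * ξ i * ξ j) :
    a = b := by
  classical
  by_contra hab
  set ξ : Fin d → ℝ := fun i => b i - a i with hξdef
  have hξ : ξ ≠ 0 := by
    intro h
    apply hab
    funext i
    have := congrFun h i
    simp only [hξdef, Pi.zero_apply] at this
    linarith
  -- the direction and the segment
  set V : Fin d → Fin d → ℝ := fun i α => ξ i * ν α with hVdef
  set γ : ℝ → (Fin d → Fin d → ℝ) :=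
    fun s => (fun i α => t * Fm i α) + s • (t • V) with hγdef
  have hγapp : ∀ s : ℝ, γ s = fun i α => t * Fm i α + s * t * (ξ i * ν α) := by
    intro s
    funext i α
    simp only [hγdef, Pi.add_apply, Pi.smul_apply, smul_eq_mul]
    ring
  have hγmem : ∀ s ∈ Set.Icc (0:ℝ) 1, γ s ∈ D := by
    intro s hs
    rw [hγapp s]
    exact hseg s hs
  have hγderiv : ∀ s : ℝ, HasDerivAt γ (t • V) s := by
    intro s
    have h1 : HasDerivAt (fun y : ℝ => y • (t • V)) ((1:ℝ) • (t • V)) s :=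
      (hasDerivAt_id s).smul_const (t • V)
    simpa [hγdef, one_smul] using h1.const_add (fun i α => t * Fm i α)
  -- differentiability facts
  have hW1 : ContDiffOn ℝ 1 (fderiv ℝ W) D :=
    hW.fderiv_of_isOpen hDo (by norm_num)
  have hΦdiff : ∀ X ∈ D, DifferentiableAt ℝ (fderiv ℝ W) X := fun X hX =>
    (hW1.contDiffAt (hDo.mem_nhds hX)).differentiableAt one_ne_zero
  -- the scalar function
  set g : ℝ → ℝ := fun s => fderiv ℝ W (γ s) V with hgdef
  have hg : ∀ s ∈ Set.Icc (0:ℝ) 1,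
      HasDerivAt g ((fderiv ℝ (fderiv ℝ W) (γ s)) (t • V) V) s := by
    intro s hs
    have hX := hγmem s hs
    have h1 : HasFDerivAt (fderiv ℝ W) (fderiv ℝ (fderiv ℝ W) (γ s)) (γ s) :=
      (hΦdiff _ hX).hasFDerivAt
    have h2 : HasDerivAt (fun s' => fderiv ℝ W (γ s'))
        ((fderiv ℝ (fderiv ℝ W) (γ s)) (t • V)) s :=
      h1.comp_hasDerivAt s (hγderiv s)
    have h3 := h2.clm_apply (hasDerivAt_const s V)
    simpa [hgdef] using h3
  -- mean value theorem
  obtain ⟨c, hc, hceq⟩ := exists_hasDerivAt_eq_slope g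
    (fun s => (fderiv ℝ (fderiv ℝ W) (γ s)) (t • V) V) one_pos
    (fun s hs => ((hg s hs).continuousAt).continuousWithinAt)
    (fun s hs => hg s (Set.mem_Icc_of_Ioo hs))
  have hceq' : (fderiv ℝ (fderiv ℝ W) (γ c)) (t • V) V = g 1 - g 0 := by
    simpa using hceq
  -- compute g 1 - g 0 from condition (C)
  have hγ1 : γ 1 = fun i' α' => t * Fm i' α' + t * ((b i' - a i') * ν α') := by
    rw [hγapp 1]; funext i α; simp only [hξdef]; ring
  have hγ0 : γ 0 = fun i' α' => t * Fm i' α' := by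
    rw [hγapp 0]; funext i α; ring
  have hg10 : g 1 - g 0 = -∑ i, ξ i ^ 2 := by
    have e1 : g 1 = ∑ i, ∑ α, V i α * fderiv ℝ W (γ 1) (Pi.single i (Pi.single α 1)) :=
      clm_eval _ _
    have e0 : g 0 = ∑ i, ∑ α, V i α * fderiv ℝ W (γ 0) (Pi.single i (Pi.single α 1)) :=
      clm_eval _ _
    rw [e1, e0, hγ1, hγ0, ← Finset.sum_sub_distrib]
    rw [show -∑ i, ξ i ^ 2 = ∑ i, -(ξ i ^ 2) by rw [Finset.sum_neg_distrib]]
    refine Finset.sum_congr rfl fun i _ => ?_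
    rw [← Finset.sum_sub_distrib]
    have hstep : ∑ α, (V i α * fderiv ℝ W
          (fun i' α' => t * Fm i' α' + t * ((b i' - a i') * ν α'))
          (Pi.single i (Pi.single α 1))
        - V i α * fderiv ℝ W (fun i' α' => t * Fm i' α') (Pi.single i (Pi.single α 1)))
        = ξ i * ∑ α, ((fderiv ℝ W (fun i' α' => t * Fm i' α' + t * ((b i' - a i') * ν α'))
          (Pi.single i (Pi.single α 1))
        - fderiv ℝ W (fun i' α' => t * Fm i' α') (Pi.single i (Pi.single α 1))) * ν α) := by
      rw [Finset.mul_sum]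
      refine Finset.sum_congr rfl fun α _ => ?_
      simp only [hVdef]
      ring
    rw [hstep]
    have hCi := hC i
    have hsum : ∑ α, ((fderiv ℝ W (fun i' α' => t * Fm i' α' + t * ((b i' - a i') * ν α'))
          (Pi.single i (Pi.single α 1))
        - fderiv ℝ W (fun i' α' => t * Fm i' α') (Pi.single i (Pi.single α 1))) * ν α)
        = -(ξ i) := by
      simp only [hξdef]
      linarith
    rw [hsum]
    ring
  -- the second derivative term
  set B := fderiv ℝ (fderiv ℝ W) (γ c) with hBdef
  have hcD : γ c ∈ D := hγmem c (Set.mem_Icc_of_Ioo hc)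
  have hflip : ∀ u v : Fin d → Fin d → ℝ,
      fderiv ℝ (fun X => fderiv ℝ W X v) (γ c) u = B u v := by
    intro u v
    have h := fderiv_clm_apply (c := fderiv ℝ W) (u := fun _ => v)
      (hΦdiff _ hcD) (differentiableAt_const v)
    rw [show (fun X => fderiv ℝ W X v) = fun y => (fderiv ℝ W y) ((fun _ => v) y) from rfl, h]
    simp [hBdef]
  have hpos := hROC (γ c) hcD ξ hξ ν hν
  have hBVV : B (t • V) V = t * ∑ i, ∑ j, ∑ α, ∑ β,
      (fderiv ℝ (fun X => fderiv ℝ W X (Pi.single j (Pi.single β 1))) (γ c)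
        (Pi.single i (Pi.single α 1))) * ν α * ν β * ξ i * ξ j := by
    rw [map_smul, ContinuousLinearMap.smul_apply, smul_eq_mul]
    congr 1
    calc B V V = ∑ i, ∑ α, V i α * (B (Pi.single i (Pi.single α 1)) V) := clm2_eval B V V
      _ = ∑ i, ∑ α, ∑ j, ∑ β, V i α * (V j β *
            B (Pi.single i (Pi.single α 1)) (Pi.single j (Pi.single β 1))) := by
          refine Finset.sum_congr rfl fun i _ => Finset.sum_congr rfl fun α _ => ?_
          rw [clm_eval (B _) V]
          simp only [Finset.mul_sum]
      _ = ∑ i, ∑ j, ∑ α, ∑ β,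
            (fderiv ℝ (fun X => fderiv ℝ W X (Pi.single j (Pi.single β 1))) (γ c)
              (Pi.single i (Pi.single α 1))) * ν α * ν β * ξ i * ξ j := by
          refine Finset.sum_congr rfl fun i _ => ?_
          rw [Finset.sum_comm]
          refine Finset.sum_congr rfl fun j _ => Finset.sum_congr rfl fun α _ =>
            Finset.sum_congr rfl fun β _ => ?_
          rw [hflip]
          simp only [hVdef]
          ring
  -- contradiction
  have h1 : (0:ℝ) < t * ∑ i, ∑ j, ∑ α, ∑ β,
      (fderiv ℝ (fun X => fderiv ℝ W X (Pi.single j (Pi.single β 1))) (γ c)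
        (Pi.single i (Pi.single α 1))) * ν α * ν β * ξ i * ξ j :=
    mul_pos ht hpos
  have h2 : (0:ℝ) ≤ ∑ i, ξ i ^ 2 := Finset.sum_nonneg fun i _ => sq_nonneg _
  rw [← hBVV, hceq', hg10] at h1
  linarith
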